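/- Let n > 1 be odd. Then the number of ordered pairs (k, ℓ) of elements of ZMod n with k ≠ ℓ such that the graph F_k ⊔ F_ℓ contains a Hamiltonian path equals n * φ(n). (Hence the near-one-factorization {F_k : k ∈ ZMod n} of the complete graph K_n has n·φ(n)/2 perfect (unordered) pairs, so c(K_n) ≥ n·φ(n)/2.) -/

import Mathlib

/-- For `n ≥ 1` and `k : ZMod n`, the graph `F k` on vertex set `ZMod n`
in which distinct vertices `i` and `j` are adjacent iff `i + j = k`. -/
def F (n : ℕ) (k : ZMod n) : SimpleGraph (ZMod n) where
  Adj i j := i ≠ j ∧ i + j = k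
  symm := ⟨fun i j ⟨h1, h2⟩ => ⟨h1.symm, by rwa [add_comm]⟩⟩
  loopless := ⟨fun i ⟨h, _⟩ => h rfl⟩

/-- A graph has a Hamiltonian path if some walk in it is a Hamiltonian path. -/
def HasHamiltonianPath {V : Type*} [DecidableEq V] (G : SimpleGraph V) : Prop :=
  ∃ (a b : V) (p : G.Walk a b), p.IsHamiltonian

/-- Auxiliary: a walk obtained from a function whose consecutive values are adjacent. -/
def walkOfFn {V : Type*} (G : SimpleGraph V) :
    (m : ℕ) → (f : ℕ → V) → (∀ i, i < m → G.Adj (f i) (f (i+1))) → G.Walk (f 0) (f m)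
  | 0, _, _ => SimpleGraph.Walk.nil
  | m+1, f, h => SimpleGraph.Walk.cons (h 0 (Nat.succ_pos m))
      (walkOfFn G m (fun i => f (i+1)) (fun i hi => h (i+1) (by omega)))

theorem walkOfFn_support {V : Type*} (G : SimpleGraph V) :
    ∀ (m : ℕ) (f : ℕ → V) (h : ∀ i, i < m → G.Adj (f i) (f (i+1))),
      (walkOfFn G m f h).support = (List.range (m+1)).map f
  | 0, f, h => rfl
  | m+1, f, h => by
    rw [walkOfFn, SimpleGraph.Walk.support_cons, walkOfFn_support,
      List.range_succ_eq_map (n := m+1)]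
    simp [List.map_map, Function.comp_def]

/-- The zig-zag exponent sequence. -/
def ee (i : ℕ) : ℤ := if i % 2 = 0 then -((i/2 : ℕ) : ℤ) else ((i/2 : ℕ) : ℤ) + 1

theorem ee_add (i : ℕ) : ee i + ee (i+1) = if i % 2 = 0 then 1 else 0 := by
  unfold ee; split_ifs <;> omega

theorem ee_inj {n i j : ℕ} (hodd : n % 2 = 1) (hi : i < n) (hj : j < n)
    (h : (n : ℤ) ∣ ee i - ee j) : i = j := by
  have h0 : ee i - ee j = 0 := by
    refine Int.eq_zero_of_abs_lt_dvd h ?_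
    rw [abs_lt]
    unfold ee; split_ifs <;> omega
  unfold ee at h0; split_ifs at h0 <;> omega

theorem hamOfUnit {n : ℕ} (hn : 1 < n) (hodd : Odd n) (k l : ZMod n)
    (hu : IsUnit (l - k)) : HasHamiltonianPath (F n k ⊔ F n l) := by
  haveI : NeZero n := ⟨by omega⟩
  set d := l - k with hd
  have h2 : IsUnit (2 : ZMod n) := by
    have h := ZMod.isUnit_iff_coprime 2 n
    rw [Nat.cast_ofNat] at h
    exact h.mpr (Nat.coprime_two_left.mpr hodd)
  set c : ZMod n := ↑h2.unit⁻¹ * k with hc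
  have hone : (2 : ZMod n) * ↑h2.unit⁻¹ = 1 := by
    nth_rewrite 1 [← h2.unit_spec]; exact h2.unit.mul_inv
  have h2c : c + c = k := by
    have : (2 : ZMod n) * c = k := by
      rw [hc, ← mul_assoc, hone, one_mul]
    linear_combination this
  set f : ℕ → ZMod n := fun i => c + ((ee i : ℤ) : ZMod n) * d with hf
  have hnmod : n % 2 = 1 := Nat.odd_iff.mp hodd
  have key : ∀ i < n, ∀ j < n, f i = f j → i = j := by
    intro i hi j hj hfe
    have h1 : ((ee i - ee j : ℤ) : ZMod n) * d = 0 := by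
      push_cast
      simp only [hf] at hfe
      linear_combination hfe
    have h2' : ((ee i - ee j : ℤ) : ZMod n) = 0 := (hu.mul_left_eq_zero).mp h1
    rw [ZMod.intCast_zmod_eq_zero_iff_dvd] at h2'
    exact ee_inj hnmod hi hj h2'
  have adj : ∀ i, i < n - 1 → (F n k ⊔ F n l).Adj (f i) (f (i+1)) := by
    intro i hi
    have hne : f i ≠ f (i+1) := by
      intro h
      have := key i (by omega) (i+1) (by omega) h
      omega
    have hsum : f i + f (i+1) = k + ((ee i + ee (i+1) : ℤ) : ZMod n) * d := by
      simp only [hf]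
      push_cast
      linear_combination h2c
    rw [SimpleGraph.sup_adj]
    by_cases hpar : i % 2 = 0
    · right
      refine And.intro hne ?_
      rw [hsum, ee_add, if_pos hpar]
      push_cast
      rw [hd]; ring
    · left
      refine And.intro hne ?_
      rw [hsum, ee_add, if_neg hpar]
      push_cast
      ring
  refine ⟨f 0, f (n-1), walkOfFn _ (n-1) f adj, ?_⟩
  intro a
  have hsupp : (walkOfFn _ (n-1) f adj).support = (List.range n).map f := by
    rw [walkOfFn_support]
    have hsucc : n - 1 + 1 = n := by omega
    rw [hsucc]
  have hnd : ((List.range n).map f).Nodup := by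
    refine List.Nodup.map_on ?_ (List.nodup_range (n := n))
    intro x hx y hy hxy
    exact key x (List.mem_range.mp hx) y (List.mem_range.mp hy) hxy
  have hmem : a ∈ (List.range n).map f := by
    have hcard : ((List.range n).map f).toFinset = Finset.univ := by
      apply Finset.eq_univ_of_card
      rw [List.toFinset_card_of_nodup hnd]
      simp [ZMod.card]
    rw [← List.mem_toFinset, hcard]
    exact Finset.mem_univ a
  show List.count a (walkOfFn _ (n-1) f adj).support = 1
  rw [hsupp]
  exact List.count_eq_one_of_mem hnd hmem

theorem unitOfHam {n : ℕ} (hn : 1 < n) (hodd : Odd n) (k l : ZMod n)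
    (hham : HasHamiltonianPath (F n k ⊔ F n l)) : IsUnit (l - k) := by
  by_contra hu
  haveI : NeZero n := ⟨by omega⟩
  set d := l - k with hd
  set g := Nat.gcd d.val n with hg
  have hgdvd : g ∣ n := Nat.gcd_dvd_right _ _
  have hgne : g ≠ 0 := by
    intro h
    rw [hg] at h
    have := Nat.eq_zero_of_gcd_eq_zero_right h
    omega
  haveI : NeZero g := ⟨hgne⟩
  have hdval : ((d.val : ℕ) : ZMod n) = d := by
    simp [ZMod.natCast_val, ZMod.cast_id]
  have hg1 : 1 < g := by
    rcases Nat.lt_or_ge g 2 with h | h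
    · interval_cases g
      · omega
      · exfalso
        apply hu
        rw [← hdval, ZMod.isUnit_iff_coprime]
        exact hg.symm
    · omega
  haveI : Fact (1 < g) := ⟨hg1⟩
  set φ : ZMod n →+* ZMod g := ZMod.castHom hgdvd (ZMod g) with hφ
  have hφd : φ d = 0 := by
    rw [← hdval, map_natCast, ZMod.natCast_eq_zero_iff]
    exact Nat.gcd_dvd_left _ _
  set ψ : ZMod n → ZMod g := fun i => (φ (2*i - k))^2 with hψ
  have hedge : ∀ i j, (F n k ⊔ F n l).Adj i j → ψ i = ψ j := by
    intro i j hij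
    rw [SimpleGraph.sup_adj] at hij
    have hcase : φ (2*j - k) = -φ (2*i - k) := by
      change (_ ∧ _) ∨ (_ ∧ _) at hij
      rcases hij with ⟨_, hsum⟩ | ⟨_, hsum⟩
      · rw [← map_neg]
        congr 1
        linear_combination 2*hsum
      · have h' : 2*j - k = -(2*i-k) + (d + d) := by
          rw [hd]; linear_combination 2*hsum
        rw [h', map_add, map_neg, map_add, hφd, add_zero, add_zero]
    simp only [hψ, hcase, neg_sq]
  have hwalkψ : ∀ {a b : ZMod n} (p : (F n k ⊔ F n l).Walk a b), ψ a = ψ b := by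
    intro a b p
    induction p with
    | nil => rfl
    | cons h p ih => exact (hedge _ _ h).trans ih
  obtain ⟨a, b, p, hp⟩ := hham
  have hmem : ∀ v : ZMod n, v ∈ p.support := by
    intro v
    have := hp v
    rw [← List.count_pos_iff]
    omega
  have hsupp : ∀ v : ZMod n, ψ v = ψ a :=
    fun v => (hwalkψ (p.takeUntil v (hmem v))).symm
  have h2 : IsUnit (2 : ZMod n) := by
    have h := ZMod.isUnit_iff_coprime 2 n
    rw [Nat.cast_ofNat] at h
    exact h.mpr (Nat.coprime_two_left.mpr hodd)
  have hsurj : ∀ t : ZMod g, ∃ i : ZMod n, φ (2*i - k) = t := by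
    intro t
    refine ⟨↑h2.unit⁻¹ * ((t.val : ZMod n) + k), ?_⟩
    have h2i : (2:ZMod n) * (↑h2.unit⁻¹ * ((t.val:ZMod n) + k)) = (t.val:ZMod n) + k := by
      nth_rewrite 1 [← h2.unit_spec]
      rw [← mul_assoc, Units.mul_inv, one_mul]
    rw [h2i, add_sub_cancel_right, map_natCast]
    simp [ZMod.natCast_val, ZMod.cast_id]
  obtain ⟨i0, hi0⟩ := hsurj 0
  obtain ⟨i1, hi1⟩ := hsurj 1
  have e0 : ψ i0 = 0 := by simp only [hψ]; rw [hi0]; norm_num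
  have e1 : ψ i1 = 1 := by simp only [hψ]; rw [hi1]; norm_num
  have : (0 : ZMod g) = 1 := by rw [← e0, hsupp i0, ← hsupp i1, e1]
  exact zero_ne_one this

theorem stmt_9 (n : ℕ) (hn : 1 < n) (hodd : Odd n) :
    Nat.card {p : ZMod n × ZMod n //
        p.1 ≠ p.2 ∧ HasHamiltonianPath (F n p.1 ⊔ F n p.2)} =
      n * Nat.totient n := by
  haveI : NeZero n := ⟨by omega⟩
  haveI : Fact (1 < n) := ⟨hn⟩
  have hiff : ∀ p : ZMod n × ZMod n,
      (p.1 ≠ p.2 ∧ HasHamiltonianPath (F n p.1 ⊔ F n p.2)) ↔ IsUnit (p.2 - p.1) := by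
    rintro ⟨k, l⟩
    constructor
    · rintro ⟨_, h⟩
      exact unitOfHam hn hodd k l h
    · intro hu
      refine ⟨?_, hamOfUnit hn hodd k l hu⟩
      intro h
      rw [h, sub_self] at hu
      rw [isUnit_zero_iff] at hu
      exact zero_ne_one hu
  rw [Nat.card_congr (Equiv.subtypeEquivRight hiff)]
  have e2 : {p : ZMod n × ZMod n // IsUnit (p.2 - p.1)} ≃ ZMod n × (ZMod n)ˣ :=
    { toFun := fun x => (x.1.1, x.2.unit)
      invFun := fun y => ⟨(y.1, y.1 + ↑y.2), by simp⟩
      left_inv := by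
        rintro ⟨⟨k, l⟩, h⟩
        apply Subtype.ext
        simp [h.unit_spec]
      right_inv := by
        rintro ⟨k, u⟩
        refine Prod.ext rfl ?_
        apply Units.ext
        simp }
  rw [Nat.card_congr e2, Nat.card_prod, Nat.card_eq_fintype_card, Nat.card_eq_fintype_card,
    ZMod.card, ZMod.card_units_eq_totient]
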